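/- Let 0 < U₁ ≤ U(x,ξ) ≤ U₂ on [ε, ħω_D]² with U continuous, and fix T ∈ [0, τ₂]. Then the operator A defined by (Au)(x) = ∫_ε^{ħω_D} U(x,ξ) (u(ξ)/√(ξ² + u(ξ)²)) tanh(√(ξ² + u(ξ)²)/(2T)) dξ maps the set V_T = {u ∈ C[ε, ħω_D] : Δ₁(T) ≤ u(x) ≤ Δ₂(T)} into itself. -/
import Mathlib


/-- The tanh factor tanh(r/(2T)), interpreted as 1 at T = 0. -/
noncomputable def tanhFac (T r : ℝ) : ℝ :=
  if T = 0 then 1 else Real.tanh (r / (2 * T))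


lemma myContinuousTanh : Continuous Real.tanh := by
  have : Real.tanh = fun x => Real.sinh x / Real.cosh x :=
    funext fun x => Real.tanh_eq_sinh_div_cosh x
  rw [this]
  exact Real.continuous_sinh.div Real.continuous_cosh fun x => (Real.cosh_pos x).ne'

lemma myTanhNonneg {x : ℝ} (hx : 0 ≤ x) : 0 ≤ Real.tanh x := by
  rw [Real.tanh_eq_sinh_div_cosh]
  exact div_nonneg (Real.sinh_nonneg_iff.mpr hx) (Real.cosh_pos x).le

lemma myTanhLeOne (x : ℝ) : Real.tanh x ≤ 1 := by
  rw [Real.tanh_eq_sinh_div_cosh]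
  exact ((div_lt_one (Real.cosh_pos x)).mpr (Real.sinh_lt_cosh x)).le

lemma myTanhMono : Monotone Real.tanh := by
  intro x y hxy
  rw [Real.tanh_eq_sinh_div_cosh, Real.tanh_eq_sinh_div_cosh,
    div_le_div_iff₀ (Real.cosh_pos x) (Real.cosh_pos y)]
  have h := Real.sinh_nonneg_iff.mpr (sub_nonneg.mpr hxy)
  rw [Real.sinh_sub] at h
  linarith

lemma tanhFac_continuous (T : ℝ) : Continuous (tanhFac T) := by
  unfold tanhFac
  rcases eq_or_ne T 0 with h | h
  · simp only [if_pos h]; exact continuous_const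
  · simp only [if_neg h]
    exact myContinuousTanh.comp (continuous_id.div_const _)

lemma tanhFac_nonneg {T r : ℝ} (hT : 0 ≤ T) (hr : 0 ≤ r) : 0 ≤ tanhFac T r := by
  unfold tanhFac
  split
  · norm_num
  · next h =>
    have : 0 < T := lt_of_le_of_ne hT (Ne.symm h)
    exact myTanhNonneg (div_nonneg hr (by linarith))

lemma tanhFac_mono {T : ℝ} (hT : 0 ≤ T) : Monotone (tanhFac T) := by
  rcases eq_or_ne T 0 with h | h
  · intro a b _; simp [tanhFac, h]
  · have hTpos : 0 < T := lt_of_le_of_ne hT (Ne.symm h)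
    intro a b hab
    simp only [tanhFac, if_neg h]
    exact myTanhMono ((div_le_div_iff_of_pos_right (by linarith)).mpr hab)

lemma h_mono {T ξ s₁ s₂ : ℝ} (hT : 0 ≤ T) (hξ : 0 < ξ) (hs₁ : 0 ≤ s₁) (hs : s₁ ≤ s₂) :
    s₁ / Real.sqrt (ξ ^ 2 + s₁ ^ 2) * tanhFac T (Real.sqrt (ξ ^ 2 + s₁ ^ 2)) ≤
    s₂ / Real.sqrt (ξ ^ 2 + s₂ ^ 2) * tanhFac T (Real.sqrt (ξ ^ 2 + s₂ ^ 2)) := by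
  have hs₂ : 0 ≤ s₂ := hs₁.trans hs
  have hp1 : 0 < ξ ^ 2 + s₁ ^ 2 := by positivity
  have hp2 : 0 < ξ ^ 2 + s₂ ^ 2 := by positivity
  have hr1 : 0 < Real.sqrt (ξ ^ 2 + s₁ ^ 2) := Real.sqrt_pos.mpr hp1
  have hr2 : 0 < Real.sqrt (ξ ^ 2 + s₂ ^ 2) := Real.sqrt_pos.mpr hp2
  have ha : s₁ / Real.sqrt (ξ ^ 2 + s₁ ^ 2) ≤ s₂ / Real.sqrt (ξ ^ 2 + s₂ ^ 2) := by
    rw [div_le_div_iff₀ hr1 hr2]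
    have e1 : s₁ * Real.sqrt (ξ ^ 2 + s₂ ^ 2) = Real.sqrt (s₁ ^ 2 * (ξ ^ 2 + s₂ ^ 2)) := by
      rw [Real.sqrt_mul (sq_nonneg s₁), Real.sqrt_sq hs₁]
    have e2 : s₂ * Real.sqrt (ξ ^ 2 + s₁ ^ 2) = Real.sqrt (s₂ ^ 2 * (ξ ^ 2 + s₁ ^ 2)) := by
      rw [Real.sqrt_mul (sq_nonneg s₂), Real.sqrt_sq hs₂]
    rw [e1, e2]
    apply Real.sqrt_le_sqrt
    have hss : s₁ ^ 2 ≤ s₂ ^ 2 := by nlinarith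
    nlinarith [mul_le_mul_of_nonneg_left hss (sq_nonneg ξ)]
  have hb : tanhFac T (Real.sqrt (ξ ^ 2 + s₁ ^ 2)) ≤ tanhFac T (Real.sqrt (ξ ^ 2 + s₂ ^ 2)) :=
    tanhFac_mono hT (Real.sqrt_le_sqrt (by nlinarith))
  exact mul_le_mul ha hb (tanhFac_nonneg hT hr1.le) (div_nonneg hs₂ hr2.le)

lemma cont_aux {ε ω : ℝ} (hε : 0 < ε) (T : ℝ) {v w : ℝ → ℝ}
    (hv : ContinuousOn v (Set.Icc ε ω)) (hw : ContinuousOn w (Set.Icc ε ω)) :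
    ContinuousOn
      (fun ξ => w ξ * (v ξ / Real.sqrt (ξ ^ 2 + v ξ ^ 2)) *
        tanhFac T (Real.sqrt (ξ ^ 2 + v ξ ^ 2))) (Set.Icc ε ω) := by
  have hsq : ContinuousOn (fun ξ => Real.sqrt (ξ ^ 2 + v ξ ^ 2)) (Set.Icc ε ω) :=
    Real.continuous_sqrt.comp_continuousOn ((continuousOn_id.pow 2).add (hv.pow 2))
  have hne : ∀ ξ ∈ Set.Icc ε ω, Real.sqrt (ξ ^ 2 + v ξ ^ 2) ≠ 0 := fun ξ hξ =>
    (Real.sqrt_pos.mpr (by nlinarith [hξ.1, sq_nonneg (v ξ)])).ne'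
  exact (hw.mul (hv.div hsq hne)).mul ((tanhFac_continuous T).comp_continuousOn hsq)

/-- The operator A maps V_T = {u ∈ C[ε, ħω_D] : Δ₁(T) ≤ u ≤ Δ₂(T)} into itself. -/
theorem stmt12 (U₁ U₂ ε ω τ₁ τ₂ : ℝ) (hε : 0 < ε) (hεω : ε < ω)
    (hU₁ : 0 < U₁) (hU₁₂ : U₁ < U₂)
    (U : ℝ → ℝ → ℝ)
    (hUcont : ContinuousOn (fun p : ℝ × ℝ => U p.1 p.2) (Set.Icc ε ω ×ˢ Set.Icc ε ω))
    (hUbd : ∀ x ∈ Set.Icc ε ω, ∀ ξ ∈ Set.Icc ε ω, U₁ ≤ U x ξ ∧ U x ξ ≤ U₂)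
    (hτ₁pos : 0 < τ₁) (hτ₂pos : 0 < τ₂)
    (hτ₁ : 1 = U₁ * ∫ ξ in ε..ω, (1 / ξ) * Real.tanh (ξ / (2 * τ₁)))
    (hτ₂ : 1 = U₂ * ∫ ξ in ε..ω, (1 / ξ) * Real.tanh (ξ / (2 * τ₂)))
    (T Δ₁ Δ₂ : ℝ) (hT : 0 ≤ T) (hTτ₂ : T ≤ τ₂)
    (hΔ₁nonneg : 0 ≤ Δ₁) (hΔ₂nonneg : 0 ≤ Δ₂)
    (hΔ₁eq : T < τ₁ →
      1 = U₁ * ∫ ξ in ε..ω,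
        (1 / Real.sqrt (ξ ^ 2 + Δ₁ ^ 2)) * tanhFac T (Real.sqrt (ξ ^ 2 + Δ₁ ^ 2)))
    (hΔ₁zero : τ₁ ≤ T → Δ₁ = 0)
    (hΔ₂eq : T < τ₂ →
      1 = U₂ * ∫ ξ in ε..ω,
        (1 / Real.sqrt (ξ ^ 2 + Δ₂ ^ 2)) * tanhFac T (Real.sqrt (ξ ^ 2 + Δ₂ ^ 2)))
    (hΔ₂zero : τ₂ ≤ T → Δ₂ = 0)
    (u : ℝ → ℝ) (hu : ContinuousOn u (Set.Icc ε ω))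
    (hubd : ∀ x ∈ Set.Icc ε ω, Δ₁ ≤ u x ∧ u x ≤ Δ₂) :
    ContinuousOn
      (fun x => ∫ ξ in ε..ω,
        U x ξ * (u ξ / Real.sqrt (ξ ^ 2 + u ξ ^ 2)) *
          tanhFac T (Real.sqrt (ξ ^ 2 + u ξ ^ 2)))
      (Set.Icc ε ω) ∧
    ∀ x ∈ Set.Icc ε ω,
      Δ₁ ≤ (∫ ξ in ε..ω,
          U x ξ * (u ξ / Real.sqrt (ξ ^ 2 + u ξ ^ 2)) *
            tanhFac T (Real.sqrt (ξ ^ 2 + u ξ ^ 2))) ∧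
      (∫ ξ in ε..ω,
          U x ξ * (u ξ / Real.sqrt (ξ ^ 2 + u ξ ^ 2)) *
            tanhFac T (Real.sqrt (ξ ^ 2 + u ξ ^ 2))) ≤ Δ₂ := by
  set s : Set ℝ := Set.Icc ε ω with hs
  -- basic continuity facts
  have hsq : ContinuousOn (fun ξ => Real.sqrt (ξ ^ 2 + u ξ ^ 2)) s :=
    Real.continuous_sqrt.comp_continuousOn ((continuousOn_id.pow 2).add (hu.pow 2))
  have hne : ∀ ξ ∈ s, Real.sqrt (ξ ^ 2 + u ξ ^ 2) ≠ 0 := fun ξ hξ =>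
    (Real.sqrt_pos.mpr (by nlinarith [hξ.1, sq_nonneg (u ξ)])).ne'
  have hdiv : ContinuousOn (fun ξ => u ξ / Real.sqrt (ξ ^ 2 + u ξ ^ 2)) s :=
    hu.div hsq hne
  have hmaps : Set.MapsTo (Prod.snd : ℝ × ℝ → ℝ) (s ×ˢ s) s := fun p hp => hp.2
  have hF : ContinuousOn
      (fun p : ℝ × ℝ => U p.1 p.2 * (u p.2 / Real.sqrt (p.2 ^ 2 + u p.2 ^ 2)) *
        tanhFac T (Real.sqrt (p.2 ^ 2 + u p.2 ^ 2))) (s ×ˢ s) :=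
    (hUcont.mul (hdiv.comp continuous_snd.continuousOn hmaps)).mul
      ((tanhFac_continuous T).comp_continuousOn (hsq.comp continuous_snd.continuousOn hmaps))
  -- Tietze extension
  obtain ⟨G, hG⟩ := ContinuousMap.exists_restrict_eq (isClosed_Icc.prod isClosed_Icc)
    (ContinuousMap.mk _ hF.restrict)
  have hGeq : ∀ p ∈ s ×ˢ s, G p =
      U p.1 p.2 * (u p.2 / Real.sqrt (p.2 ^ 2 + u p.2 ^ 2)) *
        tanhFac T (Real.sqrt (p.2 ^ 2 + u p.2 ^ 2)) := by
    intro p hp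
    simpa using DFunLike.congr_fun hG ⟨p, hp⟩
  have hGc : Continuous fun x => ∫ ξ in ε..ω, G (x, ξ) := by
    apply intervalIntegral.continuous_parametric_intervalIntegral_of_continuous'
      (f := fun x ξ => G (x, ξ))
    exact G.continuous.comp (continuous_fst.prodMk continuous_snd)
  constructor
  · refine hGc.continuousOn.congr ?_
    intro x hx
    apply intervalIntegral.integral_congr
    intro ξ hξ
    rw [Set.uIcc_of_le hεω.le] at hξ
    exact (hGeq (x, ξ) ⟨hx, hξ⟩).symm
  · intro x hx
    have hUx : ContinuousOn (fun ξ => U x ξ) s :=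
      hUcont.comp (continuous_const.prodMk continuous_id).continuousOn
        (fun ξ hξ => ⟨hx, hξ⟩)
    have hfint : IntervalIntegrable
        (fun ξ => U x ξ * (u ξ / Real.sqrt (ξ ^ 2 + u ξ ^ 2)) *
          tanhFac T (Real.sqrt (ξ ^ 2 + u ξ ^ 2))) MeasureTheory.volume ε ω := by
      apply ContinuousOn.intervalIntegrable
      rw [Set.uIcc_of_le hεω.le]
      exact cont_aux hε T hu hUx
    have hlint : IntervalIntegrable
        (fun ξ => U₁ * (Δ₁ / Real.sqrt (ξ ^ 2 + Δ₁ ^ 2)) *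
          tanhFac T (Real.sqrt (ξ ^ 2 + Δ₁ ^ 2))) MeasureTheory.volume ε ω := by
      apply ContinuousOn.intervalIntegrable
      rw [Set.uIcc_of_le hεω.le]
      exact cont_aux hε T continuousOn_const continuousOn_const
    have hmint : IntervalIntegrable
        (fun ξ => U₂ * (Δ₂ / Real.sqrt (ξ ^ 2 + Δ₂ ^ 2)) *
          tanhFac T (Real.sqrt (ξ ^ 2 + Δ₂ ^ 2))) MeasureTheory.volume ε ω := by
      apply ContinuousOn.intervalIntegrable
      rw [Set.uIcc_of_le hεω.le]
      exact cont_aux hε T continuousOn_const continuousOn_const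
    -- pointwise bounds
    have hpt : ∀ ξ ∈ Set.Icc ε ω,
        (U₁ * (Δ₁ / Real.sqrt (ξ ^ 2 + Δ₁ ^ 2)) *
          tanhFac T (Real.sqrt (ξ ^ 2 + Δ₁ ^ 2)) ≤
        U x ξ * (u ξ / Real.sqrt (ξ ^ 2 + u ξ ^ 2)) *
          tanhFac T (Real.sqrt (ξ ^ 2 + u ξ ^ 2))) ∧
        (U x ξ * (u ξ / Real.sqrt (ξ ^ 2 + u ξ ^ 2)) *
          tanhFac T (Real.sqrt (ξ ^ 2 + u ξ ^ 2)) ≤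
        U₂ * (Δ₂ / Real.sqrt (ξ ^ 2 + Δ₂ ^ 2)) *
          tanhFac T (Real.sqrt (ξ ^ 2 + Δ₂ ^ 2))) := by
      intro ξ hξ
      have hξpos : 0 < ξ := lt_of_lt_of_le hε hξ.1
      have hb := hubd ξ hξ
      have hU := hUbd x hx ξ hξ
      have hu0 : 0 ≤ u ξ := hΔ₁nonneg.trans hb.1
      have h1 := h_mono (ξ := ξ) hT hξpos hΔ₁nonneg hb.1
      have h2 := h_mono (ξ := ξ) hT hξpos hu0 hb.2
      have hn1 : 0 ≤ Δ₁ / Real.sqrt (ξ ^ 2 + Δ₁ ^ 2) *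
          tanhFac T (Real.sqrt (ξ ^ 2 + Δ₁ ^ 2)) :=
        mul_nonneg (div_nonneg hΔ₁nonneg (Real.sqrt_nonneg _))
          (tanhFac_nonneg hT (Real.sqrt_nonneg _))
      have hn2 : 0 ≤ u ξ / Real.sqrt (ξ ^ 2 + u ξ ^ 2) *
          tanhFac T (Real.sqrt (ξ ^ 2 + u ξ ^ 2)) :=
        mul_nonneg (div_nonneg hu0 (Real.sqrt_nonneg _))
          (tanhFac_nonneg hT (Real.sqrt_nonneg _))
      constructor
      · calc U₁ * (Δ₁ / Real.sqrt (ξ ^ 2 + Δ₁ ^ 2)) * tanhFac T (Real.sqrt (ξ ^ 2 + Δ₁ ^ 2))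
            = U₁ * (Δ₁ / Real.sqrt (ξ ^ 2 + Δ₁ ^ 2) * tanhFac T (Real.sqrt (ξ ^ 2 + Δ₁ ^ 2))) :=
              mul_assoc _ _ _
          _ ≤ U x ξ * (u ξ / Real.sqrt (ξ ^ 2 + u ξ ^ 2) *
                tanhFac T (Real.sqrt (ξ ^ 2 + u ξ ^ 2))) :=
              mul_le_mul hU.1 h1 hn1 (hU₁.le.trans hU.1)
          _ = _ := (mul_assoc _ _ _).symm
      · calc U x ξ * (u ξ / Real.sqrt (ξ ^ 2 + u ξ ^ 2)) *
              tanhFac T (Real.sqrt (ξ ^ 2 + u ξ ^ 2))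
            = U x ξ * (u ξ / Real.sqrt (ξ ^ 2 + u ξ ^ 2) *
                tanhFac T (Real.sqrt (ξ ^ 2 + u ξ ^ 2))) := mul_assoc _ _ _
          _ ≤ U₂ * (Δ₂ / Real.sqrt (ξ ^ 2 + Δ₂ ^ 2) *
                tanhFac T (Real.sqrt (ξ ^ 2 + Δ₂ ^ 2))) :=
              mul_le_mul hU.2 h2 hn2 (by linarith)
          _ = _ := (mul_assoc _ _ _).symm
    have hmono₁ := intervalIntegral.integral_mono_on hεω.le hlint hfint
      (fun ξ hξ => (hpt ξ hξ).1)
    have hmono₂ := intervalIntegral.integral_mono_on hεω.le hfint hmint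
      (fun ξ hξ => (hpt ξ hξ).2)
    -- compute the two bound integrals
    have hl : (∫ ξ in ε..ω, U₁ * (Δ₁ / Real.sqrt (ξ ^ 2 + Δ₁ ^ 2)) *
        tanhFac T (Real.sqrt (ξ ^ 2 + Δ₁ ^ 2))) = Δ₁ := by
      rcases lt_or_ge T τ₁ with hTτ | hTτ
      · have heq : (∫ ξ in ε..ω, U₁ * (Δ₁ / Real.sqrt (ξ ^ 2 + Δ₁ ^ 2)) *
            tanhFac T (Real.sqrt (ξ ^ 2 + Δ₁ ^ 2))) =
            ∫ ξ in ε..ω, (U₁ * Δ₁) * ((1 / Real.sqrt (ξ ^ 2 + Δ₁ ^ 2)) *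
              tanhFac T (Real.sqrt (ξ ^ 2 + Δ₁ ^ 2))) :=
          intervalIntegral.integral_congr (fun ξ _ => by ring)
        rw [heq, intervalIntegral.integral_const_mul, mul_comm U₁ Δ₁, mul_assoc,
          ← hΔ₁eq hTτ, mul_one]
      · simp [hΔ₁zero hTτ]
    have hm : (∫ ξ in ε..ω, U₂ * (Δ₂ / Real.sqrt (ξ ^ 2 + Δ₂ ^ 2)) *
        tanhFac T (Real.sqrt (ξ ^ 2 + Δ₂ ^ 2))) = Δ₂ := by
      rcases lt_or_ge T τ₂ with hTτ | hTτ
      · have heq : (∫ ξ in ε..ω, U₂ * (Δ₂ / Real.sqrt (ξ ^ 2 + Δ₂ ^ 2)) *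
            tanhFac T (Real.sqrt (ξ ^ 2 + Δ₂ ^ 2))) =
            ∫ ξ in ε..ω, (U₂ * Δ₂) * ((1 / Real.sqrt (ξ ^ 2 + Δ₂ ^ 2)) *
              tanhFac T (Real.sqrt (ξ ^ 2 + Δ₂ ^ 2))) :=
          intervalIntegral.integral_congr (fun ξ _ => by ring)
        rw [heq, intervalIntegral.integral_const_mul, mul_comm U₂ Δ₂, mul_assoc,
          ← hΔ₂eq hTτ, mul_one]
      · simp [hΔ₂zero hTτ]
    exact ⟨hl ▸ hmono₁, hm ▸ hmono₂⟩
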